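/- K₀ is a Fraïssé class; consequently there exists a countably infinite ultrahomogeneous L₀-structure M₀ whose age (the class of finite structures embeddable into M₀) is exactly K₀. (Ultrahomogeneous means every isomorphism between finite substructures extends to an automorphism.) -/

import Mathlib

open FirstOrder Language Structure CategoryTheory

/-- The language `L₀` with a `2n`-ary relation symbol `E_n` for each `n ≥ 1`. -/
def L₀ : FirstOrder.Language where
  Functions := fun _ => Empty
  Relations := fun k => {n : ℕ // 0 < n ∧ k = n + n}

/-- The relation symbol `E_n`. -/
def Esymb (n : ℕ) (hn : 0 < n) : L₀.Relations (n + n) := ⟨n, hn, rfl⟩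

/-- `E_n(x̄, ȳ)` in an `L₀`-structure. -/
def ERel (M : Type*) [L₀.Structure M] (n : ℕ) (hn : 0 < n) (x y : Fin n → M) : Prop :=
  Structure.RelMap (Esymb n hn) (Fin.append x y)

/-- The defining conditions for membership in `K₀`: each `E_n` holds only on pairs of
injective `n`-tuples, is invariant under permuting the entries of each tuple separately,
and induces an equivalence relation on `n`-element subsets. -/
def IsK0Struct (C : Type*) [L₀.Structure C] : Prop :=
  ∀ (n : ℕ) (hn : 0 < n),
    (∀ x y : Fin n → C, ERel C n hn x y → Function.Injective x ∧ Function.Injective y) ∧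
    (∀ (x y : Fin n → C) (σ τ : Equiv.Perm (Fin n)),
        ERel C n hn x y → ERel C n hn (x ∘ σ) (y ∘ τ)) ∧
    (∀ x : Fin n → C, Function.Injective x → ERel C n hn x x) ∧
    (∀ x y : Fin n → C, ERel C n hn x y → ERel C n hn y x) ∧
    (∀ x y z : Fin n → C, ERel C n hn x y → ERel C n hn y z → ERel C n hn x z)

/-- The class `K₀` of finite `L₀`-structures as above. -/
def K₀ : Set (Bundled L₀.Structure) := {C | Finite C ∧ IsK0Struct C}

namespace K0Proof

/-! ### Coding machinery on ℕ -/

abbrev Code : Type := Finset ℕ × List (Finset ℕ × (Finset ℕ ⊕ ℕ))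

noncomputable def dec (b : ℕ) : Code :=
  ((Encodable.decode (Nat.unpair b).2 : Option Code)).getD (∅, [])

noncomputable def XB (b : ℕ) : Finset ℕ := (dec b).1.filter (· < b)

lemma XB_lt {b x : ℕ} (h : x ∈ XB b) : x < b := by
  simp only [XB, Finset.mem_filter] at h; exact h.2

noncomputable def rawt (b : ℕ) (S : Finset ℕ) : Finset ℕ ⊕ ℕ :=
  match ((dec b).2.find? (fun e => decide (e.1 = S))) with
  | some e => e.2
  | none => Sum.inr 0

noncomputable def tB (b : ℕ) (S : Finset ℕ) : Finset ℕ ⊕ ℕ :=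
  match rawt b S with
  | Sum.inl T' => if T' ⊆ XB b ∧ T'.card = S.card + 1 then Sum.inl T' else Sum.inr 0
  | Sum.inr l => Sum.inr l

lemma tB_inl {b : ℕ} {S T' : Finset ℕ} (h : tB b S = Sum.inl T') :
    T' ⊆ XB b ∧ T'.card = S.card + 1 := by
  unfold tB at h
  rcases hr : rawt b S with T'' | l <;> rw [hr] at h
  · by_cases hc : T'' ⊆ XB b ∧ T''.card = S.card + 1
    · simp only [hc, if_true] at h; cases h; exact hc
    · simp only [hc, if_false] at h; cases h
  · cases h

lemma tB_inl_sup {b : ℕ} {S T' : Finset ℕ} (h : tB b S = Sum.inl T') :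
    T'.Nonempty ∧ T'.sup id < b := by
  obtain ⟨h1, h2⟩ := tB_inl h
  have hne : T'.Nonempty := Finset.card_pos.1 (by omega)
  have hlt : ∀ x ∈ T', x < b := fun x hx => XB_lt (h1 hx)
  have hb : 0 < b := hne.elim fun x hx => Nat.lt_of_le_of_lt (Nat.zero_le x) (hlt x hx)
  exact ⟨hne, (Finset.sup_lt_iff hb).2 hlt⟩

/-- The class tag of a finite subset of ℕ. -/
noncomputable def ctag (T : Finset ℕ) : (ℕ × ℕ) ⊕ Finset ℕ :=
  if hT : T.Nonempty then
    if T.erase (T.max' hT) ⊆ XB (T.max' hT) then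
      match h : tB (T.max' hT) (T.erase (T.max' hT)) with
      | Sum.inl T' => ctag T'
      | Sum.inr l => Sum.inl (T.max' hT, l)
    else Sum.inr T
  else Sum.inr T
termination_by T.sup id
decreasing_by
  · exact Nat.lt_of_lt_of_le (tB_inl_sup h).2 (Finset.le_sup (f := id) (T.max'_mem hT))

set_option maxHeartbeats 2000000 in
lemma ctag_of_empty {T : Finset ℕ} (hT : ¬ T.Nonempty) : ctag T = Sum.inr T := by
  rw [ctag.eq_def, dif_neg hT]

set_option maxHeartbeats 2000000 in
lemma ctag_of_not_sub {T : Finset ℕ} (hT : T.Nonempty)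
    (h : ¬ T.erase (T.max' hT) ⊆ XB (T.max' hT)) : ctag T = Sum.inr T := by
  rw [ctag.eq_def, dif_pos hT, if_neg h]

set_option maxHeartbeats 2000000 in
lemma ctag_of_inl {T T' : Finset ℕ} (hT : T.Nonempty)
    (hsub : T.erase (T.max' hT) ⊆ XB (T.max' hT))
    (h : tB (T.max' hT) (T.erase (T.max' hT)) = Sum.inl T') : ctag T = ctag T' := by
  rw [ctag.eq_def, dif_pos hT, if_pos hsub]
  split <;> rename_i heq
  · rw [h] at heq; cases heq; rfl
  · rw [h] at heq; cases heq

set_option maxHeartbeats 2000000 in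
lemma ctag_of_inr {T : Finset ℕ} {l : ℕ} (hT : T.Nonempty)
    (hsub : T.erase (T.max' hT) ⊆ XB (T.max' hT))
    (h : tB (T.max' hT) (T.erase (T.max' hT)) = Sum.inr l) :
    ctag T = Sum.inl (T.max' hT, l) := by
  rw [ctag.eq_def, dif_pos hT, if_pos hsub]
  split <;> rename_i heq
  · rw [h] at heq; cases heq
  · rw [h] at heq; cases heq; rfl

lemma ctag_inl_bound_aux : ∀ (n : ℕ) (T : Finset ℕ), T.sup id ≤ n →
    ∀ (b l : ℕ), ctag T = Sum.inl (b, l) → b ≤ T.sup id := by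
  intro n
  induction n using Nat.strong_induction_on with
  | _ n IH =>
    intro T hTn b l h
    by_cases hT : T.Nonempty
    · by_cases hsub : T.erase (T.max' hT) ⊆ XB (T.max' hT)
      · rcases heq : tB (T.max' hT) (T.erase (T.max' hT)) with T' | l'
        · rw [ctag_of_inl hT hsub heq] at h
          obtain ⟨hne, hlt⟩ := tB_inl_sup heq
          have hmax : T.max' hT ≤ T.sup id := Finset.le_sup (f := id) (T.max'_mem hT)
          have := IH (T'.sup id) (by omega) T' le_rfl b l h
          omega
        · rw [ctag_of_inr hT hsub heq] at h
          simp only [Sum.inl.injEq, Prod.mk.injEq] at h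
          rw [← h.1]
          exact Finset.le_sup (f := id) (T.max'_mem hT)
      · rw [ctag_of_not_sub hT hsub] at h; cases h
    · rw [ctag_of_empty hT] at h; cases h

/-- Fresh tags coming from `b` can only occur for sets whose max is at least `b`. -/
lemma ctag_inl_bound {T : Finset ℕ} {b l : ℕ} (h : ctag T = Sum.inl (b, l)) : b ≤ T.sup id :=
  ctag_inl_bound_aux (T.sup id) T le_rfl b l h

/-- A fresh tag at `b` differs from the tag of any set of elements below `b`. -/
lemma fresh_ne_old {T : Finset ℕ} {b l : ℕ} (hT : ∀ x ∈ T, x < b) :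
    Sum.inl (b, l) ≠ ctag T := by
  intro h
  rcases hc : ctag T with p | T''
  · rw [hc] at h
    cases h
    have hb := ctag_inl_bound hc
    rcases Finset.eq_empty_or_nonempty T with rfl | hne
    · simp [ctag_of_empty] at hc
    · have : T.sup id < b := (Finset.sup_lt_iff
        (hne.elim fun x hx => Nat.lt_of_le_of_lt (Nat.zero_le x) (hT x hx))).2 hT
      omega
  · rw [hc] at h; cases h

lemma find?_map (u : Finset ℕ → Finset ℕ ⊕ ℕ) :
    ∀ (l : List (Finset ℕ)), l.Nodup → ∀ S ∈ l,
      ((l.map (fun S => (S, u S))).find? (fun e => decide (e.1 = S))) = some (S, u S) := by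
  intro l
  induction l with
  | nil => intro _ S hS; cases hS
  | cons S₀ l ih =>
    intro hnd S hS
    simp only [List.map_cons]
    by_cases h : S₀ = S
    · subst h; rw [List.find?_cons_of_pos (by simp)]
    · rw [List.find?_cons_of_neg (by simp [h])]
      exact ih (List.nodup_cons.1 hnd).2 S ((List.mem_cons.1 hS).resolve_left (fun h' => h h'.symm))

lemma exists_code (X : Finset ℕ) (u : Finset ℕ → Finset ℕ ⊕ ℕ)
    (hu : ∀ S, S ⊆ X → ∀ T', u S = Sum.inl T' → T' ⊆ X ∧ T'.card = S.card + 1) :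
    ∃ b : ℕ, (∀ x ∈ X, x < b) ∧ XB b = X ∧ ∀ S, S ⊆ X → tB b S = u S := by
  classical
  obtain ⟨b, hb1, hb2⟩ : ∃ b, (X.sup id < b) ∧
      dec b = (X, X.powerset.toList.map (fun S => (S, u S))) := by
    refine ⟨Nat.pair (X.sup id + 1)
      (Encodable.encode ((X, X.powerset.toList.map (fun S => (S, u S))) : Code)), ?_, ?_⟩
    · have := Nat.left_le_pair (X.sup id + 1)
        (Encodable.encode ((X, X.powerset.toList.map (fun S => (S, u S))) : Code))
      omega
    · rw [dec, Nat.unpair_pair]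
      simp [Encodable.encodek]
  have hxlt : ∀ x ∈ X, x < b := fun x hx =>
    Nat.lt_of_le_of_lt (Finset.le_sup (f := id) hx) hb1
  have hXB : XB b = X := by
    rw [XB, hb2]
    exact Finset.filter_true_of_mem hxlt
  refine ⟨b, hxlt, hXB, ?_⟩
  intro S hS
  have hfind : rawt b S = u S := by
    rw [rawt, hb2]
    rw [find?_map u X.powerset.toList X.powerset.nodup_toList S
      (by simp [Finset.mem_toList, Finset.mem_powerset, hS])]
  rw [tB, hfind]
  rcases hu' : u S with T' | l'
  · obtain ⟨h1, h2⟩ := hu S hS T' hu'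
    simp [hXB.symm ▸ h1, h2]
  · rfl

/-! ### The generic structure on `ULift ℕ` -/

universe u v

noncomputable instance natStructure : L₀.Structure (ULift.{u} ℕ) where
  funMap := fun {n} f _ => f.elim
  RelMap := fun {k} r w =>
    Function.Injective (fun i : Fin r.1 => w (Fin.cast r.2.2.symm (Fin.castAdd r.1 i))) ∧
    Function.Injective (fun i : Fin r.1 => w (Fin.cast r.2.2.symm (Fin.natAdd r.1 i))) ∧
    ctag (Finset.image (fun i : Fin r.1 =>
        (w (Fin.cast r.2.2.symm (Fin.castAdd r.1 i))).down) Finset.univ) =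
      ctag (Finset.image (fun i : Fin r.1 =>
        (w (Fin.cast r.2.2.symm (Fin.natAdd r.1 i))).down) Finset.univ)

lemma erel_nat {n : ℕ} (hn : 0 < n) (x y : Fin n → ULift.{u} ℕ) :
    ERel (ULift.{u} ℕ) n hn x y ↔
      (Function.Injective x ∧ Function.Injective y ∧
        ctag (Finset.image (fun i => (x i).down) Finset.univ) =
          ctag (Finset.image (fun i => (y i).down) Finset.univ)) := by
  show (Function.Injective (fun i : Fin n => Fin.append x y (Fin.cast rfl (Fin.castAdd n i))) ∧
    Function.Injective (fun i : Fin n => Fin.append x y (Fin.cast rfl (Fin.natAdd n i))) ∧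
    ctag (Finset.image (fun i : Fin n =>
        (Fin.append x y (Fin.cast rfl (Fin.castAdd n i))).down) Finset.univ) =
      ctag (Finset.image (fun i : Fin n =>
        (Fin.append x y (Fin.cast rfl (Fin.natAdd n i))).down) Finset.univ)) ↔ _
  simp only [Fin.cast_refl, id_eq, Fin.append_left, Fin.append_right]

lemma image_comp_perm {β γ α : Type*} [Fintype β] [Fintype γ] [DecidableEq β] [DecidableEq γ]
    [DecidableEq α] (z : γ → α) (σ : β ≃ γ) :
    Finset.image (fun i => z (σ i)) Finset.univ = Finset.image z Finset.univ := by
  have h := Finset.image_image (s := (Finset.univ : Finset β)) (f := ⇑σ) (g := z)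
  rw [Finset.image_univ_equiv] at h
  exact h.symm

lemma isK0_nat : IsK0Struct (ULift.{u} ℕ) := by
  intro n hn
  refine ⟨fun x y h => ?_, fun x y σ τ h => ?_, fun x hx => ?_, fun x y h => ?_,
    fun x y z h1 h2 => ?_⟩
  · rw [erel_nat] at h; exact ⟨h.1, h.2.1⟩
  · rw [erel_nat] at h ⊢
    refine ⟨h.1.comp σ.injective, h.2.1.comp τ.injective, ?_⟩
    have hx := image_comp_perm (fun i => (x i).down) σ
    have hy := image_comp_perm (fun i => (y i).down) τ
    show ctag (Finset.image (fun i => (x (σ i)).down) Finset.univ) = _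
    rw [show (fun i => (x (σ i)).down) = (fun i => ((fun j => (x j).down) (σ i))) from rfl]
    rw [hx]
    rw [show (fun i : Fin n => ((y ∘ τ) i).down) = (fun i => ((fun j => (y j).down) (τ i))) from rfl]
    rw [hy]
    exact h.2.2
  · rw [erel_nat]; exact ⟨hx, hx, rfl⟩
  · rw [erel_nat] at h ⊢; exact ⟨h.2.1, h.1, h.2.2.symm⟩
  · rw [erel_nat] at h1 h2 ⊢; exact ⟨h1.1, h2.2.1, h1.2.2.trans h2.2.2⟩

/-! ### Abstract side: canonical enumerations and the set-level relation -/

section Abstract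

variable {A : Type v} [L₀.Structure A]

noncomputable def aenum (U : Finset A) : Fin U.card → A := fun i => ((U.equivFin.symm i) : A)

lemma aenum_inj (U : Finset A) : Function.Injective (aenum U) := fun i j h =>
  U.equivFin.symm.injective (Subtype.coe_injective h)

lemma aenum_mem (U : Finset A) (i : Fin U.card) : aenum U i ∈ U := (U.equivFin.symm i).2

lemma aenum_image (U : Finset A) [DecidableEq A] :
    Finset.image (aenum U) Finset.univ = U := by
  apply Finset.Subset.antisymm
  · intro t ht
    simp only [Finset.mem_image] at ht
    obtain ⟨i, _, rfl⟩ := ht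
    exact aenum_mem U i
  · intro t ht
    simp only [Finset.mem_image]
    exact ⟨U.equivFin ⟨t, ht⟩, Finset.mem_univ _, by simp [aenum]⟩

lemma erel_cast {m n : ℕ} (h : m = n) (hm : 0 < m) (hn : 0 < n) (x y : Fin n → A) :
    ERel A n hn x y ↔ ERel A m hm (x ∘ Fin.cast h) (y ∘ Fin.cast h) := by
  subst h
  exact Iff.rfl

lemma exists_perm {n : ℕ} (x x' : Fin n → A) (hx : Function.Injective x)
    (hx' : Function.Injective x') [DecidableEq A]
    (him : Finset.image x' Finset.univ = Finset.image x Finset.univ) :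
    ∃ σ : Equiv.Perm (Fin n), x ∘ σ = x' := by
  have h : ∀ i, ∃ j, x j = x' i := by
    intro i
    have : x' i ∈ Finset.image x Finset.univ :=
      him ▸ Finset.mem_image_of_mem x' (Finset.mem_univ i)
    simpa [Finset.mem_image, eq_comm] using this
  choose f hf using h
  have hfinj : Function.Injective f := fun i j hij => hx' (by rw [← hf i, ← hf j, hij])
  exact ⟨Equiv.ofBijective f (Finite.injective_iff_bijective.1 hfinj),
    funext fun i => hf i⟩

/-- The set-level relation induced by the `E`-relations. -/
def AR (U V : Finset A) : Prop :=
  ∃ (hU : U.Nonempty) (h : U.card = V.card),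
    ERel A U.card (Finset.card_pos.2 hU) (aenum U) (aenum V ∘ Fin.cast h)

variable (hA : IsK0Struct A)
include hA

lemma erel_iff_ar [DecidableEq A] {n : ℕ} (hn : 0 < n) (x y : Fin n → A)
    (hx : Function.Injective x) (hy : Function.Injective y) :
    ERel A n hn x y ↔ AR (Finset.image x Finset.univ) (Finset.image y Finset.univ) := by
  set U := Finset.image x Finset.univ with hU
  set V := Finset.image y Finset.univ with hV
  have hUcard : U.card = n := by
    rw [hU, Finset.card_image_of_injective _ hx, Finset.card_univ, Fintype.card_fin]
  have hVcard : V.card = n := by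
    rw [hV, Finset.card_image_of_injective _ hy, Finset.card_univ, Fintype.card_fin]
  have hUne : U.Nonempty := Finset.card_pos.1 (hUcard ▸ hn)
  have hpos : 0 < U.card := Finset.card_pos.2 hUne
  have hcastU : Function.Injective (aenum U ∘ Fin.cast hUcard.symm) :=
    (aenum_inj U).comp (Fin.cast_injective _)
  have hcastV : Function.Injective (aenum V ∘ Fin.cast hVcard.symm) :=
    (aenum_inj V).comp (Fin.cast_injective _)
  have himU : Finset.image (aenum U ∘ Fin.cast hUcard.symm) Finset.univ =
      Finset.image x Finset.univ := by
    have h := image_comp_perm (aenum U) (finCongr hUcard.symm)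
    rw [aenum_image] at h
    exact h
  have himV : Finset.image (aenum V ∘ Fin.cast hVcard.symm) Finset.univ =
      Finset.image y Finset.univ := by
    have h := image_comp_perm (aenum V) (finCongr hVcard.symm)
    rw [aenum_image] at h
    exact h
  obtain ⟨σ, hσ⟩ := exists_perm x (aenum U ∘ Fin.cast hUcard.symm) hx hcastU himU
  obtain ⟨τ, hτ⟩ := exists_perm y (aenum V ∘ Fin.cast hVcard.symm) hy hcastV himV
  constructor
  · intro h
    have h2 := (hA n hn).2.1 x y σ τ h
    rw [hσ, hτ] at h2
    refine ⟨hUne, by rw [hUcard, hVcard], ?_⟩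
    exact (erel_cast hUcard hpos hn _ _).1 h2
  · rintro ⟨hU', hcard, h⟩
    have h2 : ERel A n hn (aenum U ∘ Fin.cast hUcard.symm)
        (aenum V ∘ Fin.cast hVcard.symm) := (erel_cast hUcard.symm hn hpos _ _).1 h
    rw [← hσ, ← hτ] at h2
    have h3 := (hA n hn).2.1 _ _ σ⁻¹ τ⁻¹ h2
    have e1 : (x ∘ ⇑σ) ∘ ⇑σ⁻¹ = x := by funext i; simp
    have e2 : (y ∘ ⇑τ) ∘ ⇑τ⁻¹ = y := by funext i; simp
    rwa [e1, e2] at h3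

lemma ar_refl {U : Finset A} (hU : U.Nonempty) : AR U U :=
  ⟨hU, rfl, (hA _ (Finset.card_pos.2 hU)).2.2.1 (aenum U) (aenum_inj U)⟩

lemma ar_symm {U V : Finset A} (h : AR U V) : AR V U := by
  obtain ⟨hU, hcard, h⟩ := h
  have hV : V.Nonempty := Finset.card_pos.1 (hcard ▸ Finset.card_pos.2 hU)
  refine ⟨hV, hcard.symm, ?_⟩
  have h2 := (hA U.card (Finset.card_pos.2 hU)).2.2.2.1 _ _ h
  exact (erel_cast hcard (Finset.card_pos.2 hU) (Finset.card_pos.2 hV) _ _).2 h2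

lemma ar_trans {U V W : Finset A} (h1 : AR U V) (h2 : AR V W) : AR U W := by
  obtain ⟨hU, hc1, e1⟩ := h1
  obtain ⟨hV, hc2, e2⟩ := h2
  refine ⟨hU, hc1.trans hc2, ?_⟩
  have e2' : ERel A U.card (Finset.card_pos.2 hU) (aenum V ∘ Fin.cast hc1)
      (aenum W ∘ Fin.cast (hc1.trans hc2)) :=
    (erel_cast hc1 (Finset.card_pos.2 hU) (Finset.card_pos.2 hV) _ _).1 e2
  exact (hA U.card (Finset.card_pos.2 hU)).2.2.2.2 _ _ _ e1 e2'

omit hA in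
lemma ar_card {U V : Finset A} (h : AR U V) : U.card = V.card := h.2.1

omit hA in
lemma ar_nonempty {U V : Finset A} (h : AR U V) : U.Nonempty := h.1

end Abstract

section Bridge

lemma image_down_aenum (U : Finset (ULift.{u} ℕ)) :
    Finset.image (fun i => (aenum U i).down) Finset.univ = U.image ULift.down := by
  classical
  have h := Finset.image_image (s := (Finset.univ : Finset (Fin U.card)))
    (f := aenum U) (g := ULift.down)
  rw [aenum_image] at h
  exact h.symm

lemma ar_nat {U V : Finset (ULift.{u} ℕ)} :
    AR U V ↔ (U.Nonempty ∧ U.card = V.card ∧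
      ctag (U.image ULift.down) = ctag (V.image ULift.down)) := by
  classical
  constructor
  · rintro ⟨hU, hcard, h⟩
    rw [erel_nat] at h
    refine ⟨hU, hcard, ?_⟩
    have h2 := h.2.2
    rw [image_down_aenum] at h2
    have h3 : Finset.image (fun i => ((aenum V ∘ Fin.cast hcard) i).down) Finset.univ =
        V.image ULift.down := by
      have h4 := image_comp_perm (fun i => (aenum V i).down) (finCongr hcard)
      rw [image_down_aenum] at h4
      exact h4
    rwa [h3] at h2
  · rintro ⟨hU, hcard, h⟩
    refine ⟨hU, hcard, ?_⟩
    rw [erel_nat]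
    refine ⟨aenum_inj U, (aenum_inj V).comp (Fin.cast_injective _), ?_⟩
    rw [image_down_aenum]
    have h3 : Finset.image (fun i => ((aenum V ∘ Fin.cast hcard) i).down) Finset.univ =
        V.image ULift.down := by
      have h4 := image_comp_perm (fun i => (aenum V i).down) (finCongr hcard)
      rw [image_down_aenum] at h4
      exact h4
    rw [h3]
    exact h

variable {A : Type v} [L₀.Structure A]

/-- A partial embedding (on the finite set `s`) into the generic structure. -/
def PEmb (s : Finset A) (g : A → ℕ) : Prop :=
  Set.InjOn g ↑s ∧ ∀ U V : Finset A, U ⊆ s → V ⊆ s → U.Nonempty → U.card = V.card →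
    (AR U V ↔ ctag (U.image g) = ctag (V.image g))

lemma pemb_erel [DecidableEq A] (hA : IsK0Struct A) {s : Finset A} {g : A → ℕ}
    (hg : PEmb s g) {n : ℕ} (hn : 0 < n) (x y : Fin n → A)
    (hxs : ∀ i, x i ∈ s) (hys : ∀ i, y i ∈ s) :
    ERel A n hn x y ↔
      ERel (ULift.{u} ℕ) n hn (fun i => ULift.up (g (x i))) (fun i => ULift.up (g (y i))) := by
  have himx : Finset.image (fun i => g (x i)) Finset.univ = (Finset.image x Finset.univ).image g := by
    rw [Finset.image_image]; rfl
  have himy : Finset.image (fun i => g (y i)) Finset.univ = (Finset.image y Finset.univ).image g := by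
    rw [Finset.image_image]; rfl
  constructor
  · intro h
    have hx := ((hA n hn).1 x y h).1
    have hy := ((hA n hn).1 x y h).2
    have har := (erel_iff_ar hA hn x y hx hy).1 h
    have hUsub : Finset.image x Finset.univ ⊆ s := by
      intro t ht; obtain ⟨i, _, rfl⟩ := Finset.mem_image.1 ht; exact hxs i
    have hVsub : Finset.image y Finset.univ ⊆ s := by
      intro t ht; obtain ⟨i, _, rfl⟩ := Finset.mem_image.1 ht; exact hys i
    have hUcard : (Finset.image x Finset.univ).card = n := by
      rw [Finset.card_image_of_injective _ hx, Finset.card_univ, Fintype.card_fin]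
    have hVcard : (Finset.image y Finset.univ).card = n := by
      rw [Finset.card_image_of_injective _ hy, Finset.card_univ, Fintype.card_fin]
    have hctag := (hg.2 _ _ hUsub hVsub (Finset.card_pos.1 (by rw [hUcard]; exact hn))
      (by rw [hUcard, hVcard])).1 har
    rw [erel_nat]
    refine ⟨fun i j hij => hx (hg.1 (hxs i) (hxs j) (congrArg ULift.down hij)), ?_, ?_⟩
    · exact fun i j hij => hy (hg.1 (hys i) (hys j) (congrArg ULift.down hij))
    · show ctag (Finset.image (fun i => g (x i)) Finset.univ) = _
      rw [himx, himy]
      exact hctag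
  · intro h
    rw [erel_nat] at h
    have hx : Function.Injective x := fun i j hij => h.1 (by simp only [hij])
    have hy : Function.Injective y := fun i j hij => h.2.1 (by simp only [hij])
    have hUsub : Finset.image x Finset.univ ⊆ s := by
      intro t ht; obtain ⟨i, _, rfl⟩ := Finset.mem_image.1 ht; exact hxs i
    have hVsub : Finset.image y Finset.univ ⊆ s := by
      intro t ht; obtain ⟨i, _, rfl⟩ := Finset.mem_image.1 ht; exact hys i
    have hUcard : (Finset.image x Finset.univ).card = n := by
      rw [Finset.card_image_of_injective _ hx, Finset.card_univ, Fintype.card_fin]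
    have hVcard : (Finset.image y Finset.univ).card = n := by
      rw [Finset.card_image_of_injective _ hy, Finset.card_univ, Fintype.card_fin]
    have hctag : ctag ((Finset.image x Finset.univ).image g) =
        ctag ((Finset.image y Finset.univ).image g) := by
      rw [← himx, ← himy]
      exact h.2.2
    have har := (hg.2 _ _ hUsub hVsub (Finset.card_pos.1 (by rw [hUcard]; exact hn))
      (by rw [hUcard, hVcard])).2 hctag
    exact (erel_iff_ar hA hn x y hx hy).2 har

lemma eq_append {β : Type*} {n : ℕ} (v : Fin (n + n) → β) :
    v = Fin.append (fun i => v (Fin.castAdd n i)) (fun i => v (Fin.natAdd n i)) := by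
  funext i
  refine Fin.addCases (fun j => ?_) (fun j => ?_) i
  · rw [Fin.append_left]
  · rw [Fin.append_right]

/-- Build an embedding of a substructure from a partial embedding. -/
noncomputable def embOfPEmb [DecidableEq A] (hA : IsK0Struct A) (S : L₀.Substructure A)
    (s : Finset A) (hSs : (S : Set A) = ↑s) (g : A → ℕ) (hg : PEmb s g) :
    S ↪[L₀] ULift.{u} ℕ where
  toFun := fun x => ULift.up (g x)
  inj' := by
    intro x y h
    have hmem : ∀ z : S, (z : A) ∈ s := fun z => by
      have hz : (z : A) ∈ (S : Set A) := z.2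
      rw [hSs] at hz
      exact hz
    exact Subtype.ext (hg.1 (hmem x) (hmem y) (congrArg ULift.down h))
  map_fun' := fun {n} f _ => Empty.elim f
  map_rel' := by
    intro k r x
    obtain ⟨n, hn, rfl⟩ := r
    have hmem : ∀ i : Fin (n + n), ((x i : A)) ∈ s := by
      intro i
      have hz : ((x i : A)) ∈ (S : Set A) := (x i).2
      rw [hSs] at hz
      exact hz
    have key := pemb_erel hA hg hn (fun i => ((x (Fin.castAdd n i) : A)))
      (fun i => ((x (Fin.natAdd n i) : A))) (fun i => hmem _) (fun i => hmem _)
    unfold ERel at key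
    rw [eq_append ((fun x : S => (ULift.up (g ↑x) : ULift.{u} ℕ)) ∘ x)]
    refine Iff.trans ?_ (Iff.rfl :
      Structure.RelMap (M := A) (Esymb n hn) (fun i => ((x i : A))) ↔ _)
    rw [eq_append (fun i => ((x i : A)))]
    exact key.symm

end Bridge

section Extend

variable {A : Type v} [L₀.Structure A]

lemma extend [DecidableEq A] (hA : IsK0Struct A) (s : Finset A) (g : A → ℕ)
    (hg : PEmb s g) (a : A) (ha : a ∉ s) :
    ∃ b : ℕ, b ∉ s.image g ∧ PEmb (insert a s) (Function.update g a b) := by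
  classical
  set X := s.image g with hX
  set pre : Finset ℕ → Finset A := fun S => s.filter (fun t => g t ∈ S) with hpreDef
  have hpre_sub : ∀ S, pre S ⊆ s := fun S => Finset.filter_subset _ _
  have hpre_img : ∀ S, S ⊆ X → (pre S).image g = S := by
    intro S hS
    apply Finset.Subset.antisymm
    · intro t ht
      simp only [hpreDef, Finset.mem_image, Finset.mem_filter] at ht
      obtain ⟨w, ⟨_, hw⟩, rfl⟩ := ht
      exact hw
    · intro t ht
      obtain ⟨w, hw, rfl⟩ := Finset.mem_image.1 (hS ht)
      exact Finset.mem_image.2 ⟨w, Finset.mem_filter.2 ⟨hw, ht⟩, rfl⟩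
  have hpre_of : ∀ U : Finset A, U ⊆ s → pre (U.image g) = U := by
    intro U hU
    apply Finset.Subset.antisymm
    · intro t ht
      simp only [hpreDef, Finset.mem_filter, Finset.mem_image] at ht
      obtain ⟨hts, w, hw, hgw⟩ := ht
      rwa [← hg.1 (Finset.mem_coe.2 (hU hw)) (Finset.mem_coe.2 hts) hgw]
    · intro t ht
      exact Finset.mem_filter.2 ⟨hU ht, Finset.mem_image_of_mem g ht⟩
  have hXsub : ∀ W : Finset A, W ⊆ s → W.image g ⊆ X := fun W hW =>
    Finset.image_subset_image hW
  have hcard_im : ∀ W : Finset A, W ⊆ s → (W.image g).card = W.card := fun W hW =>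
    Finset.card_image_of_injOn (hg.1.mono (Finset.coe_subset.2 hW))
  have hins_card : ∀ W : Finset A, W ⊆ s → (insert a W).card = W.card + 1 := fun W hW =>
    Finset.card_insert_of_notMem (fun haW => ha (hW haW))
  set Old : Finset A → Prop := fun W => ∃ V' ⊆ s, AR (insert a W) V' with hOldDef
  set lab : Finset A → ℕ := fun W =>
    if h : ((X.powerset.filter (fun S' => AR (insert a W) (insert a (pre S')))).image
        Encodable.encode).Nonempty
    then ((X.powerset.filter (fun S' => AR (insert a W) (insert a (pre S')))).image
        Encodable.encode).min' h
    else 0 with hlabDef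
  have hlab_mem : ∀ W : Finset A, W ⊆ s → (W.image g) ∈
      X.powerset.filter (fun S' => AR (insert a W) (insert a (pre S'))) := by
    intro W hW
    refine Finset.mem_filter.2 ⟨Finset.mem_powerset.2 (hXsub W hW), ?_⟩
    rw [hpre_of W hW]
    exact ar_refl hA ⟨a, Finset.mem_insert_self a W⟩
  have hlab_min : ∀ W : Finset A, W ⊆ s → lab W ∈ (X.powerset.filter
      (fun S' => AR (insert a W) (insert a (pre S')))).image Encodable.encode := by
    intro W hW
    have hne : ((X.powerset.filter (fun S' => AR (insert a W) (insert a (pre S')))).image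
        Encodable.encode).Nonempty :=
      ⟨_, Finset.mem_image_of_mem _ (hlab_mem W hW)⟩
    simp only [hlabDef]
    rw [dif_pos hne]
    exact Finset.min'_mem _ hne
  have hlab_iff : ∀ W₁, W₁ ⊆ s → ∀ W₂, W₂ ⊆ s →
      (lab W₁ = lab W₂ ↔ AR (insert a W₁) (insert a W₂)) := by
    intro W₁ hW₁ W₂ hW₂
    constructor
    · intro hl
      obtain ⟨S₁, hS₁, he₁⟩ := Finset.mem_image.1 (hlab_min W₁ hW₁)
      obtain ⟨S₂, hS₂, he₂⟩ := Finset.mem_image.1 (hlab_min W₂ hW₂)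
      have hSS : S₁ = S₂ := Encodable.encode_injective (by rw [he₁, he₂, hl])
      subst hSS
      exact ar_trans hA (Finset.mem_filter.1 hS₁).2 (ar_symm hA (Finset.mem_filter.1 hS₂).2)
    · intro har
      have hfilter : X.powerset.filter (fun S' => AR (insert a W₁) (insert a (pre S'))) =
          X.powerset.filter (fun S' => AR (insert a W₂) (insert a (pre S'))) := by
        apply Finset.filter_congr
        intro S' _
        exact ⟨fun h => ar_trans hA (ar_symm hA har) h, fun h => ar_trans hA har h⟩
      simp only [hlabDef, hfilter]
  set asg : Finset ℕ → Finset ℕ ⊕ ℕ := fun S =>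
    if h : ∃ S' ∈ X.powerset, AR (insert a (pre S)) (pre S') then Sum.inl h.choose
    else Sum.inr (lab (pre S)) with hasgDef
  have hvalid : ∀ S, S ⊆ X → ∀ T', asg S = Sum.inl T' → T' ⊆ X ∧ T'.card = S.card + 1 := by
    intro S hS T' hT'
    simp only [hasgDef] at hT'
    split at hT' <;> rename_i h
    · injection hT' with hT''
      subst hT''
      obtain ⟨hch, har⟩ := h.choose_spec
      refine ⟨Finset.mem_powerset.1 hch, ?_⟩
      have hc := ar_card har
      have h1 : (pre S).card = S.card := by
        rw [← hcard_im _ (hpre_sub S), hpre_img S hS]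
      have h2 : (pre h.choose).card = h.choose.card := by
        rw [← hcard_im _ (hpre_sub h.choose), hpre_img h.choose (Finset.mem_powerset.1 hch)]
      have h3 : (insert a (pre S)).card = (pre S).card + 1 := hins_card _ (hpre_sub S)
      omega
    · cases hT'
  obtain ⟨b, hblt, hbXB, hbtB⟩ := exists_code X asg hvalid
  have hbX : b ∉ X := fun h => lt_irrefl b (hblt b h)
  refine ⟨b, hbX, ?_⟩
  set g' : A → ℕ := Function.update g a b with hg'Def
  have hg'_s : ∀ t ∈ s, g' t = g t := fun t ht =>
    Function.update_of_ne (fun (h : t = a) => ha (h ▸ ht)) _ _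
  have hg'_a : g' a = b := Function.update_self _ _ _
  have him' : ∀ W : Finset A, W ⊆ s → W.image g' = W.image g := fun W hW =>
    Finset.image_congr (fun t ht => hg'_s t (hW (Finset.mem_coe.1 ht)))
  have herase_sub : ∀ U : Finset A, U ⊆ insert a s → U.erase a ⊆ s := by
    intro U hU t ht
    obtain ⟨htne, htU⟩ := Finset.mem_erase.1 ht
    rcases Finset.mem_insert.1 (hU htU) with rfl | h
    · exact absurd rfl htne
    · exact h
  have himU' : ∀ U : Finset A, U ⊆ insert a s → a ∈ U →
      U.image g' = insert b ((U.erase a).image g) := by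
    intro U hU haU
    conv_lhs => rw [← Finset.insert_erase haU]
    rw [Finset.image_insert, hg'_a, him' _ (herase_sub U hU)]
  have hbS : ∀ S : Finset ℕ, S ⊆ X → b ∉ S := fun S hS hb => hbX (hS hb)
  have hins_ne : ∀ S : Finset ℕ, (insert b S).Nonempty :=
    fun S => ⟨b, Finset.mem_insert_self _ _⟩
  have hins_max : ∀ S : Finset ℕ, S ⊆ X → (insert b S).max' (hins_ne S) = b := by
    intro S hS
    refine le_antisymm (Finset.max'_le _ _ _ ?_)
      (Finset.le_max' _ _ (Finset.mem_insert_self _ _))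
    intro y hy
    rcases Finset.mem_insert.1 hy with rfl | hy
    · exact le_rfl
    · exact le_of_lt (hblt y (hS hy))
  have hctag_inl : ∀ S : Finset ℕ, S ⊆ X → ∀ T', asg S = Sum.inl T' →
      ctag (insert b S) = ctag T' := by
    intro S hS T' hT'
    have her : (insert b S).erase ((insert b S).max' (hins_ne S)) = S := by
      rw [hins_max S hS]
      exact Finset.erase_insert (hbS S hS)
    apply ctag_of_inl (hins_ne S)
    · rw [her, hins_max S hS, hbXB]
      exact hS
    · rw [her, hins_max S hS, hbtB S hS]
      exact hT'
  have hctag_inr : ∀ S : Finset ℕ, S ⊆ X → ∀ l, asg S = Sum.inr l →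
      ctag (insert b S) = Sum.inl (b, l) := by
    intro S hS l hl
    have her : (insert b S).erase ((insert b S).max' (hins_ne S)) = S := by
      rw [hins_max S hS]
      exact Finset.erase_insert (hbS S hS)
    have h := ctag_of_inr (hins_ne S)
      (by rw [her, hins_max S hS, hbXB]; exact hS)
      (by rw [her, hins_max S hS, hbtB S hS]; exact hl)
    rwa [hins_max S hS] at h
  have hOld_iff : ∀ W : Finset A, W ⊆ s →
      (Old W ↔ ∃ S' ∈ X.powerset, AR (insert a (pre (W.image g))) (pre S')) := by
    intro W hW
    simp only [hOldDef, hpre_of W hW]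
    constructor
    · rintro ⟨V', hV', har⟩
      exact ⟨V'.image g, Finset.mem_powerset.2 (hXsub V' hV'), by rwa [hpre_of V' hV']⟩
    · rintro ⟨S', hS', har⟩
      exact ⟨pre S', hpre_sub S', har⟩
  have keyOld : ∀ W, W ⊆ s → ∀ V, V ⊆ s → AR (insert a W) V →
      ctag (insert b (W.image g)) = ctag (V.image g) := by
    intro W hW V hV har
    have hex : ∃ S' ∈ X.powerset, AR (insert a (pre (W.image g))) (pre S') :=
      (hOld_iff W hW).1 ⟨V, hV, har⟩
    have hasg : asg (W.image g) = Sum.inl hex.choose := by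
      simp only [hasgDef]
      rw [dif_pos hex]
    obtain ⟨hch, harch⟩ := hex.choose_spec
    have h1 : ctag (insert b (W.image g)) = ctag hex.choose :=
      hctag_inl _ (hXsub W hW) _ hasg
    have hchX : hex.choose ⊆ X := Finset.mem_powerset.1 hch
    have harch' : AR (insert a W) (pre hex.choose) := by
      convert harch using 3
      exact (hpre_of W hW).symm
    have har2 : AR (pre hex.choose) V := ar_trans hA (ar_symm hA harch') har
    have hcards : (pre hex.choose).card = V.card := ar_card har2
    have hne : (pre hex.choose).Nonempty := ar_nonempty har2
    have h2 := (hg.2 _ _ (hpre_sub _) hV hne hcards).1 har2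
    rw [hpre_img _ hchX] at h2
    exact h1.trans h2
  have keyFresh : ∀ W, W ⊆ s → ¬ Old W →
      ctag (insert b (W.image g)) = Sum.inl (b, lab W) := by
    intro W hW hnold
    have hnex : ¬ ∃ S' ∈ X.powerset, AR (insert a (pre (W.image g))) (pre S') :=
      fun hex => hnold ((hOld_iff W hW).2 hex)
    have hasg : asg (W.image g) = Sum.inr (lab (pre (W.image g))) := by
      simp only [hasgDef]
      rw [dif_neg hnex]
    rw [hpre_of W hW] at hasg
    exact hctag_inr _ (hXsub W hW) _ hasg
  have main2 : ∀ U V : Finset A, U ⊆ insert a s → V ⊆ s → U.card = V.card → a ∈ U →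
      (AR U V ↔ ctag (U.image g') = ctag (V.image g')) := by
    intro U V hU hV hcard haU
    have hW : U.erase a ⊆ s := herase_sub U hU
    have hUW : U = insert a (U.erase a) := (Finset.insert_erase haU).symm
    rw [himU' U hU haU, him' V hV]
    constructor
    · intro har
      rw [hUW] at har
      exact keyOld _ hW V hV har
    · intro hct
      by_cases hold : Old (U.erase a)
      · obtain ⟨V', hV', harV'⟩ := hold
        have h1 : ctag (insert b ((U.erase a).image g)) = ctag (V'.image g) :=
          keyOld _ hW V' hV' harV'
        have h2 : ctag (V'.image g) = ctag (V.image g) := h1.symm.trans hct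
        have hc1 : V'.card = (insert a (U.erase a)).card := (ar_card harV').symm
        have hcV : V'.card = V.card := by rw [hc1, ← hUW, hcard]
        have hneV' : V'.Nonempty := Finset.card_pos.1 (by
          rw [hc1]
          exact Finset.card_pos.2 (ar_nonempty harV'))
        have har2 := (hg.2 V' V hV' hV hneV' hcV).2 h2
        rw [hUW]
        exact ar_trans hA harV' har2
      · exfalso
        rw [keyFresh _ hW hold] at hct
        exact fresh_ne_old (fun x hx => hblt x (hXsub V hV hx)) hct
  refine ⟨?_, ?_⟩
  · intro x hx y hy hxy
    rw [Finset.coe_insert, Set.mem_insert_iff] at hx hy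
    rcases hx with rfl | hx <;> rcases hy with rfl | hy
    · rfl
    · exfalso
      have hb : b = g y := by
        rw [← hg'_a, ← hg'_s y (Finset.mem_coe.1 hy)]
        exact hxy
      exact hbX (by rw [hb]; exact Finset.mem_image_of_mem g (Finset.mem_coe.1 hy))
    · exfalso
      have hb : b = g x := by
        rw [← hg'_a, ← hg'_s x (Finset.mem_coe.1 hx)]
        exact hxy.symm
      exact hbX (by rw [hb]; exact Finset.mem_image_of_mem g (Finset.mem_coe.1 hx))
    · exact hg.1 hx hy (by rw [← hg'_s x (Finset.mem_coe.1 hx), ← hg'_s y (Finset.mem_coe.1 hy)]; exact hxy)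
  · intro U V hU hV hUne hcard
    by_cases haU : a ∈ U <;> by_cases haV : a ∈ V
    · -- both contain a
      have hWU : U.erase a ⊆ s := herase_sub U hU
      have hWV : V.erase a ⊆ s := herase_sub V hV
      have hUW : U = insert a (U.erase a) := (Finset.insert_erase haU).symm
      have hVW : V = insert a (V.erase a) := (Finset.insert_erase haV).symm
      rw [himU' U hU haU, himU' V hV haV]
      by_cases holdU : Old (U.erase a) <;> by_cases holdV : Old (V.erase a)
      · obtain ⟨VU, hVU, harU⟩ := holdU
        obtain ⟨VV, hVV, harV⟩ := holdV
        rw [keyOld _ hWU VU hVU harU, keyOld _ hWV VV hVV harV]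
        have harU' : AR U VU := by rw [hUW]; exact harU
        have harV' : AR V VV := by rw [hVW]; exact harV
        have hcU : VU.card = U.card := by rw [← ar_card harU']
        have hcV : VV.card = V.card := by rw [← ar_card harV']
        have hneVU : VU.Nonempty := Finset.card_pos.1 (by
          rw [hcU]; exact Finset.card_pos.2 hUne)
        constructor
        · intro har
          have harr : AR VU VV :=
            ar_trans hA (ar_symm hA harU') (ar_trans hA har harV')
          exact (hg.2 VU VV hVU hVV hneVU (by rw [hcU, hcV, hcard])).1 harr
        · intro h
          have harr : AR VU VV :=
            (hg.2 VU VV hVU hVV hneVU (by rw [hcU, hcV, hcard])).2 h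
          exact ar_trans hA harU' (ar_trans hA harr (ar_symm hA harV'))
      · obtain ⟨VU, hVU, harU⟩ := holdU
        rw [keyOld _ hWU VU hVU harU, keyFresh _ hWV holdV]
        have harU' : AR U VU := by rw [hUW]; exact harU
        constructor
        · intro har
          exact absurd ⟨VU, hVU, by rw [← hVW]; exact ar_trans hA (ar_symm hA har) harU'⟩ holdV
        · intro h
          exact absurd h.symm (fresh_ne_old (fun x hx => hblt x (hXsub VU hVU hx)))
      · obtain ⟨VV, hVV, harV⟩ := holdV
        rw [keyFresh _ hWU holdU, keyOld _ hWV VV hVV harV]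
        have harV' : AR V VV := by rw [hVW]; exact harV
        constructor
        · intro har
          exact absurd ⟨VV, hVV, by rw [← hUW]; exact ar_trans hA har harV'⟩ holdU
        · intro h
          exact absurd h (fresh_ne_old (fun x hx => hblt x (hXsub VV hVV hx)))
      · rw [keyFresh _ hWU holdU, keyFresh _ hWV holdV]
        constructor
        · intro har
          have hl : AR (insert a (U.erase a)) (insert a (V.erase a)) := by
            rw [← hUW, ← hVW]; exact har
          rw [(hlab_iff _ hWU _ hWV).2 hl]
        · intro h
          simp only [Sum.inl.injEq, Prod.mk.injEq, true_and] at h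
          have hl := (hlab_iff _ hWU _ hWV).1 h
          rw [hUW, hVW]
          exact hl
    · -- a ∈ U, a ∉ V
      have hVs : V ⊆ s := fun t ht =>
        (Finset.mem_insert.1 (hV ht)).resolve_left (fun h => haV (h ▸ ht))
      exact main2 U V hU hVs hcard haU
    · -- a ∉ U, a ∈ V
      have hUs : U ⊆ s := fun t ht =>
        (Finset.mem_insert.1 (hU ht)).resolve_left (fun h => haU (h ▸ ht))
      have h := main2 V U hV hUs hcard.symm haV
      constructor
      · intro har
        exact ((h.1 (ar_symm hA har))).symm
      · intro hct
        exact ar_symm hA (h.2 hct.symm)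
    · -- neither
      have hUs : U ⊆ s := fun t ht =>
        (Finset.mem_insert.1 (hU ht)).resolve_left (fun h => haU (h ▸ ht))
      have hVs : V ⊆ s := fun t ht =>
        (Finset.mem_insert.1 (hV ht)).resolve_left (fun h => haV (h ▸ ht))
      rw [him' U hUs, him' V hVs]
      exact hg.2 U V hUs hVs hUne hcard

end Extend

section Assemble

lemma comp_append {α β : Type*} {n : ℕ} (f : α → β) (x y : Fin n → α) :
    f ∘ Fin.append x y = Fin.append (f ∘ x) (f ∘ y) := by
  funext i
  refine Fin.addCases (fun j => ?_) (fun j => ?_) i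
  · show f (Fin.append x y (Fin.castAdd n j)) = Fin.append (f ∘ x) (f ∘ y) (Fin.castAdd n j)
    rw [Fin.append_left, Fin.append_left]
    rfl
  · show f (Fin.append x y (Fin.natAdd n j)) = Fin.append (f ∘ x) (f ∘ y) (Fin.natAdd n j)
    rw [Fin.append_right, Fin.append_right]
    rfl

lemma pemb_empty {A : Type v} [L₀.Structure A] : PEmb (∅ : Finset A) (fun _ => 0) := by
  constructor
  · simp
  · intro U V hU _ hUne _
    obtain rfl := Finset.subset_empty.1 hU
    exact absurd hUne (by simp)

lemma exists_pemb {A : Type v} [L₀.Structure A] [DecidableEq A] (hA : IsK0Struct A)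
    (s : Finset A) : ∃ g, PEmb s g := by
  induction s using Finset.induction_on with
  | empty => exact ⟨fun _ => 0, pemb_empty⟩
  | @insert a s ha ih =>
    obtain ⟨g, hg⟩ := ih
    obtain ⟨b, _, hg'⟩ := extend hA s g hg a ha
    exact ⟨_, hg'⟩

lemma embed_of_K0 (A : Type v) [L₀.Structure A] [Finite A] (hA : IsK0Struct A) :
    Nonempty (A ↪[L₀] ULift.{u} ℕ) := by
  classical
  cases nonempty_fintype A
  obtain ⟨g, hg⟩ := exists_pemb hA (Finset.univ : Finset A)
  have e := embOfPEmb hA ⊤ Finset.univ (by simp) g hg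
  exact ⟨e.comp Substructure.topEquiv.symm.toEmbedding⟩

lemma isK0_of_embedding {A : Type*} [L₀.Structure A] {B : Type*} [L₀.Structure B]
    (e : A ↪[L₀] B) (hB : IsK0Struct B) : IsK0Struct A := by
  intro n hn
  have key : ∀ x y : Fin n → A, ERel A n hn x y ↔ ERel B n hn (⇑e ∘ x) (⇑e ∘ y) := by
    intro x y
    unfold ERel
    rw [← comp_append]
    exact (e.map_rel' (Esymb n hn) (Fin.append x y)).symm
  refine ⟨fun x y h => ?_, fun x y σ τ h => ?_, fun x hx => ?_, fun x y h => ?_,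
    fun x y z h1 h2 => ?_⟩
  · rw [key] at h
    obtain ⟨h1, h2⟩ := (hB n hn).1 _ _ h
    exact ⟨fun i j hij => h1 (show (⇑e ∘ x) i = (⇑e ∘ x) j by simp [Function.comp, hij]),
      fun i j hij => h2 (show (⇑e ∘ y) i = (⇑e ∘ y) j by simp [Function.comp, hij])⟩
  · rw [key] at h ⊢
    exact (hB n hn).2.1 _ _ σ τ h
  · rw [key]
    exact (hB n hn).2.2.1 _ (e.injective.comp hx)
  · rw [key] at h ⊢
    exact (hB n hn).2.2.2.1 _ _ h
  · rw [key] at h1 h2 ⊢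
    exact (hB n hn).2.2.2.2 _ _ _ h1 h2

lemma relational_closure {N : Type w} [L₀.Structure N] (t : Set N) :
    ((Substructure.closure L₀ t : L₀.Substructure N) : Set N) = t := by
  apply Set.Subset.antisymm
  · have hle : Substructure.closure L₀ t ≤ ⟨t, fun {n} f _ _ => Empty.elim f⟩ :=
      (Substructure.closure_le (S := ⟨t, fun {n} f _ _ => Empty.elim f⟩)).2 subset_rfl
    exact fun x hx => hle hx
  · exact Substructure.subset_closure

lemma finite_of_fg {N : Type w} [L₀.Structure N] (h : Structure.FG L₀ N) : Finite N := by
  obtain ⟨t, ht⟩ := h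
  have h1 : ((Substructure.closure L₀ (↑t : Set N) : L₀.Substructure N) : Set N) = Set.univ := by
    rw [ht]; rfl
  rw [relational_closure] at h1
  have : (Set.univ : Set N).Finite := h1 ▸ t.finite_toSet
  exact Set.finite_univ_iff.1 this

lemma fg_of_finite {N : Type w} [L₀.Structure N] [Finite N] : Structure.FG L₀ N := by
  cases nonempty_fintype N
  exact ⟨Finset.univ, le_antisymm le_top
    (fun x _ => Substructure.subset_closure (by simp))⟩

lemma age_ulift : L₀.age (ULift.{u} ℕ) = K₀ := by
  ext N
  constructor
  · rintro ⟨hFG, ⟨e⟩⟩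
    exact ⟨finite_of_fg hFG, isK0_of_embedding e isK0_nat⟩
  · rintro ⟨hfin, hK⟩
    haveI : Finite N := hfin
    exact ⟨fg_of_finite, embed_of_K0 N hK⟩

lemma pemb_down (t : Finset (ULift.{u} ℕ)) : PEmb t ULift.down := by
  refine ⟨fun x _ y _ h => ULift.down_injective h, ?_⟩
  intro U V _ _ hUne hcard
  rw [ar_nat]
  exact ⟨fun h => h.2.2, fun h => ⟨hUne, hcard, h⟩⟩

open Classical in
lemma emb_pemb {S : L₀.Substructure (ULift.{u} ℕ)} (f : S ↪[L₀] ULift.{u} ℕ)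
    (t : Finset (ULift.{u} ℕ)) (hts : (S : Set (ULift.{u} ℕ)) = ↑t) :
    PEmb t (fun z => if h : z ∈ S then (f ⟨z, h⟩).down else 0) := by
  classical
  set g₀ : ULift.{u} ℕ → ℕ := fun z => if h : z ∈ S then (f ⟨z, h⟩).down else 0 with hg₀
  have hmem : ∀ z : ULift.{u} ℕ, z ∈ t → z ∈ S := fun z hz => by
    rw [← SetLike.mem_coe, hts]
    exact Finset.mem_coe.2 hz
  refine ⟨?_, ?_⟩
  · intro x hx y hy hxy
    have hxS := hmem x (Finset.mem_coe.1 hx)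
    have hyS := hmem y (Finset.mem_coe.1 hy)
    have h1 : g₀ x = (f ⟨x, hxS⟩).down := by simp only [hg₀]; rw [dif_pos hxS]
    have h2 : g₀ y = (f ⟨y, hyS⟩).down := by simp only [hg₀]; rw [dif_pos hyS]
    have hxy' : (f ⟨x, hxS⟩).down = (f ⟨y, hyS⟩).down := by rw [← h1, ← h2]; exact hxy
    exact congrArg Subtype.val (f.injective (ULift.down_injective hxy'))
  · intro U V hU hV hUne hcard
    have hpos : 0 < U.card := Finset.card_pos.2 hUne
    set x' : Fin U.card → S := fun i => ⟨aenum U i, hmem _ (hU (aenum_mem U i))⟩ with hx'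
    set y' : Fin U.card → S := fun i =>
      ⟨aenum V (Fin.cast hcard i), hmem _ (hV (aenum_mem V _))⟩ with hy'
    have hmr := f.map_rel' (Esymb U.card hpos) (Fin.append x' y')
    have e1 : (fun i => ((Fin.append x' y' i : S) : ULift.{u} ℕ)) =
        Fin.append (aenum U) (aenum V ∘ Fin.cast hcard) :=
      comp_append (fun z : S => (z : ULift.{u} ℕ)) x' y'
    have hS_iff : Structure.RelMap (M := S) (Esymb U.card hpos) (Fin.append x' y') ↔ AR U V := by
      constructor
      · intro h
        refine ⟨hUne, hcard, ?_⟩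
        show Structure.RelMap (M := ULift.{u} ℕ) (Esymb U.card hpos)
          (Fin.append (aenum U) (aenum V ∘ Fin.cast hcard))
        rw [← e1]
        exact h
      · rintro ⟨_, _, h'⟩
        show Structure.RelMap (M := ULift.{u} ℕ) (Esymb U.card hpos)
          (fun i => ((Fin.append x' y' i : S) : ULift.{u} ℕ))
        rw [e1]
        exact h'
    have e2 : ⇑f ∘ Fin.append x' y' = Fin.append (fun i => f (x' i)) (fun i => f (y' i)) :=
      comp_append ⇑f x' y'
    have himU : Finset.image (fun i => (f (x' i)).down) Finset.univ = U.image g₀ := by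
      have h1 : ∀ i, (f (x' i)).down = g₀ (aenum U i) := by
        intro i
        simp only [hg₀]
        rw [dif_pos (hmem _ (hU (aenum_mem U i)))]
      calc Finset.image (fun i => (f (x' i)).down) Finset.univ
          = Finset.image (fun i => g₀ (aenum U i)) Finset.univ := by simp only [h1]
        _ = U.image g₀ := by
            rw [show (fun i => g₀ (aenum U i)) = g₀ ∘ (aenum U) from rfl]
            rw [show Finset.image (g₀ ∘ aenum U) Finset.univ =
              (Finset.univ.image (aenum U)).image g₀ from (Finset.image_image).symm]
            rw [aenum_image]
    have himV : Finset.image (fun i => (f (y' i)).down) Finset.univ = V.image g₀ := by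
      have h1 : ∀ i, (f (y' i)).down = g₀ (aenum V (Fin.cast hcard i)) := by
        intro i
        simp only [hg₀]
        rw [dif_pos (hmem _ (hV (aenum_mem V _)))]
      have h2 : Finset.image (fun i => g₀ (aenum V (Fin.cast hcard i))) Finset.univ =
          Finset.image (fun i => g₀ (aenum V i)) Finset.univ :=
        image_comp_perm (fun i => g₀ (aenum V i)) (finCongr hcard)
      calc Finset.image (fun i => (f (y' i)).down) Finset.univ
          = Finset.image (fun i => g₀ (aenum V (Fin.cast hcard i))) Finset.univ := by
            simp only [h1]
        _ = Finset.image (fun i => g₀ (aenum V i)) Finset.univ := h2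
        _ = V.image g₀ := by
            rw [show (fun i => g₀ (aenum V i)) = g₀ ∘ (aenum V) from rfl]
            rw [show Finset.image (g₀ ∘ aenum V) Finset.univ =
              (Finset.univ.image (aenum V)).image g₀ from (Finset.image_image).symm]
            rw [aenum_image]
    have hM_iff : Structure.RelMap (M := ULift.{u} ℕ) (Esymb U.card hpos)
        (⇑f ∘ Fin.append x' y') ↔ ctag (U.image g₀) = ctag (V.image g₀) := by
      rw [e2]
      rw [show (Structure.RelMap (M := ULift.{u} ℕ) (Esymb U.card hpos)
        (Fin.append (fun i => f (x' i)) (fun i => f (y' i)))) =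
        ERel (ULift.{u} ℕ) U.card hpos (fun i => f (x' i)) (fun i => f (y' i)) from rfl]
      rw [erel_nat, himU, himV]
      constructor
      · rintro ⟨_, _, h⟩
        exact h
      · intro h
        refine ⟨fun i j hij => ?_, fun i j hij => ?_, h⟩
        · have h1 := congrArg Subtype.val (f.injective hij)
          exact aenum_inj U h1
        · have h1 := congrArg Subtype.val (f.injective hij)
          exact Fin.cast_injective _ (aenum_inj V h1)
    exact hS_iff.symm.trans (hmr.symm.trans hM_iff)

lemma extpair : L₀.IsExtensionPair (ULift.{u} ℕ) (ULift.{u} ℕ) := by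
  rw [isExtensionPair_iff_exists_embedding_closure_singleton_sup]
  intro S hS f m
  classical
  obtain ⟨t, ht⟩ := hS
  have hSset : (S : Set (ULift.{u} ℕ)) = ↑t := by rw [← ht, relational_closure]
  by_cases hm : m ∈ S
  · have hle : Substructure.closure L₀ {m} ⊔ S ≤ S :=
      sup_le (Substructure.closure_le.2 (Set.singleton_subset_iff.2 hm)) le_rfl
    refine ⟨f.comp (Substructure.inclusion hle), ?_⟩
    ext x
    rfl
  · have hmt : m ∉ t := fun h => hm (by
      rw [← SetLike.mem_coe, hSset]; exact Finset.mem_coe.2 h)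
    have hg₀ := emb_pemb f t hSset
    obtain ⟨b, _, hg'⟩ := extend isK0_nat t _ hg₀ m hmt
    have hCset : ((Substructure.closure L₀ {m} ⊔ S : L₀.Substructure (ULift.{u} ℕ)) :
        Set (ULift.{u} ℕ)) = ↑(insert m t) := by
      rw [← ht, ← Substructure.closure_union, Finset.coe_insert, Set.singleton_union,
        relational_closure]
    refine ⟨embOfPEmb isK0_nat _ (insert m t) hCset _ hg', ?_⟩
    ext x
    have hxS : (x : ULift.{u} ℕ) ∈ S := x.2
    have hxm : (x : ULift.{u} ℕ) ≠ m := fun h => hm (h ▸ hxS)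
    have key : f x = ULift.up (Function.update
        (fun z => if h : z ∈ S then (f ⟨z, h⟩).down else 0) m b (x : ULift.{u} ℕ)) := by
      rw [Function.update_of_ne hxm]
      rw [dif_pos hxS]
    exact congrArg ULift.down key

lemma ultra : L₀.IsUltrahomogeneous (ULift.{u} ℕ) :=
  (isUltrahomogeneous_iff_IsExtensionPair Structure.cg_of_countable).2 extpair

end Assemble

end K0Proof

/-- `K₀` is a Fraïssé class, and it has a Fraïssé limit: a countably infinite
ultrahomogeneous `L₀`-structure whose age is exactly `K₀`. -/
theorem K0_isFraisse_and_limit_exists :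
    IsFraisse K₀ ∧
      ∃ (M₀ : Type) (inst : L₀.Structure M₀), Countable M₀ ∧ Infinite M₀ ∧
        @Language.IsUltrahomogeneous L₀ M₀ inst ∧ @Language.age L₀ M₀ inst = K₀ := by
  constructor
  · have h := (K0Proof.ultra).age_isFraisse
    rwa [K0Proof.age_ulift] at h
  · exact ⟨ULift.{0} ℕ, K0Proof.natStructure, inferInstance, inferInstance,
      K0Proof.ultra, K0Proof.age_ulift⟩
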